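/- arXiv:2202.09869 — 4 statements merged into one kernel-verified Lean document; each statement's English description precedes it below -/
import Mathlib

section
/- Under the orthogonality setting, the stacked matrix J := [J_x; J_ξ] ∈ ℝ^{n×n} (the block matrix whose first m rows are J_x and last r rows are J_ξ) is invertible, and its inverse is the block matrix [J_x^{#A} | J_ξ^{#A}] whose first m columns are J_x^{#A} and last r columns are J_ξ^{#A}. -/
open Matrix

/-- The `A`-weighted generalized pseudo-inverse `J^{#A} = A⁻¹ Jᵀ (J A⁻¹ Jᵀ)⁻¹`. -/
noncomputable def weightedPseudoInv {n m : ℕ} (A : Matrix (Fin n) (Fin n) ℝ)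
    (J : Matrix (Fin m) (Fin n) ℝ) : Matrix (Fin n) (Fin m) ℝ :=
  A⁻¹ * Jᵀ * (J * A⁻¹ * Jᵀ)⁻¹

/-- In the orthogonality setting (`A` symmetric positive definite,
`Jx Jᵀ`-Gram matrices invertible, `Jx A⁻¹ Jξᵀ = 0`, `m + r = n`), the stacked matrix
`J = [Jx; Jξ]` is invertible with inverse the block matrix `[Jx^{#A} | Jξ^{#A}]`. -/
theorem stacked_jacobian_inverse {m r : ℕ}
    (A : Matrix (Fin (m + r)) (Fin (m + r)) ℝ) (hA : A.PosDef)
    (Jx : Matrix (Fin m) (Fin (m + r)) ℝ) (Jξ : Matrix (Fin r) (Fin (m + r)) ℝ)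
    (hx : IsUnit (Jx * A⁻¹ * Jxᵀ)) (hξ : IsUnit (Jξ * A⁻¹ * Jξᵀ))
    (horth : Jx * A⁻¹ * Jξᵀ = 0) :
    IsUnit ((Matrix.fromRows Jx Jξ).submatrix finSumFinEquiv.symm id) ∧
    ((Matrix.fromRows Jx Jξ).submatrix finSumFinEquiv.symm id)⁻¹ =
      (Matrix.fromCols (weightedPseudoInv A Jx) (weightedPseudoInv A Jξ)).submatrix
        id finSumFinEquiv.symm := by
  have hAinv : (A⁻¹)ᵀ = A⁻¹ := by
    rw [Matrix.transpose_nonsing_inv]; congr 1; exact hA.isHermitian.eq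
  have horth' : Jξ * A⁻¹ * Jxᵀ = 0 := by
    have := congrArg Matrix.transpose horth
    simpa [Matrix.transpose_mul, hAinv, Matrix.mul_assoc] using this
  have h1 : Jx * weightedPseudoInv A Jx = 1 := by
    unfold weightedPseudoInv
    rw [← Matrix.mul_assoc, ← Matrix.mul_assoc,
      Matrix.mul_nonsing_inv _ ((Matrix.isUnit_iff_isUnit_det _).mp hx)]
  have h2 : Jx * weightedPseudoInv A Jξ = 0 := by
    unfold weightedPseudoInv
    rw [← Matrix.mul_assoc, ← Matrix.mul_assoc, horth, Matrix.zero_mul]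
  have h3 : Jξ * weightedPseudoInv A Jx = 0 := by
    unfold weightedPseudoInv
    rw [← Matrix.mul_assoc, ← Matrix.mul_assoc, horth', Matrix.zero_mul]
  have h4 : Jξ * weightedPseudoInv A Jξ = 1 := by
    unfold weightedPseudoInv
    rw [← Matrix.mul_assoc, ← Matrix.mul_assoc,
      Matrix.mul_nonsing_inv _ ((Matrix.isUnit_iff_isUnit_det _).mp hξ)]
  have key : ((Matrix.fromRows Jx Jξ).submatrix finSumFinEquiv.symm id) *
      ((Matrix.fromCols (weightedPseudoInv A Jx) (weightedPseudoInv A Jξ)).submatrix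
        id finSumFinEquiv.symm) = 1 := by
    have := Matrix.submatrix_mul_equiv (Matrix.fromRows Jx Jξ)
      (Matrix.fromCols (weightedPseudoInv A Jx) (weightedPseudoInv A Jξ))
      finSumFinEquiv.symm (Equiv.refl _) finSumFinEquiv.symm
    simp only [Equiv.coe_refl] at this
    rw [this, Matrix.fromRows_mul_fromCols, h1, h2, h3, h4,
      Matrix.fromBlocks_one, Matrix.submatrix_one_equiv]
  have hdet : IsUnit ((Matrix.fromRows Jx Jξ).submatrix finSumFinEquiv.symm id).det := by
    apply IsUnit.of_mul_eq_one (b := ((Matrix.fromCols (weightedPseudoInv A Jx)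
      (weightedPseudoInv A Jξ)).submatrix id finSumFinEquiv.symm).det)
    rw [← Matrix.det_mul, key, Matrix.det_one]
  exact ⟨(Matrix.isUnit_iff_isUnit_det _).mpr hdet, Matrix.inv_eq_right_inv key⟩
end

section
/- Under the orthogonality setting, the completeness relation J_x^{#A} J_x + J_ξ^{#A} J_ξ = I_n holds. -/
open Matrix

/-- In the orthogonality setting, the completeness relation
`Jx^{#A} Jx + Jξ^{#A} Jξ = I` holds. -/
theorem completeness_relation {m r : ℕ}
    (A : Matrix (Fin (m + r)) (Fin (m + r)) ℝ) (hA : A.PosDef)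
    (Jx : Matrix (Fin m) (Fin (m + r)) ℝ) (Jξ : Matrix (Fin r) (Fin (m + r)) ℝ)
    (hx : IsUnit (Jx * A⁻¹ * Jxᵀ)) (hξ : IsUnit (Jξ * A⁻¹ * Jξᵀ))
    (horth : Jx * A⁻¹ * Jξᵀ = 0) :
    weightedPseudoInv A Jx * Jx + weightedPseudoInv A Jξ * Jξ =
      (1 : Matrix (Fin (m + r)) (Fin (m + r)) ℝ) := by
  have hAinvT : (A⁻¹)ᵀ = A⁻¹ := by
    rw [transpose_nonsing_inv]
    congr 1
    simpa using hA.isHermitian.eq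
  have horth' : Jξ * A⁻¹ * Jxᵀ = 0 := by
    have h := congrArg Matrix.transpose horth
    simpa [transpose_mul, hAinvT, Matrix.mul_assoc] using h
  have h11 : Jx * weightedPseudoInv A Jx = 1 := by
    unfold weightedPseudoInv
    rw [← Matrix.mul_assoc, ← Matrix.mul_assoc]
    exact mul_nonsing_inv _ ((isUnit_iff_isUnit_det _).mp hx)
  have h22 : Jξ * weightedPseudoInv A Jξ = 1 := by
    unfold weightedPseudoInv
    rw [← Matrix.mul_assoc, ← Matrix.mul_assoc]
    exact mul_nonsing_inv _ ((isUnit_iff_isUnit_det _).mp hξ)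
  have h12 : Jx * weightedPseudoInv A Jξ = 0 := by
    unfold weightedPseudoInv
    rw [← Matrix.mul_assoc, ← Matrix.mul_assoc, horth, Matrix.zero_mul]
  have h21 : Jξ * weightedPseudoInv A Jx = 0 := by
    unfold weightedPseudoInv
    rw [← Matrix.mul_assoc, ← Matrix.mul_assoc, horth', Matrix.zero_mul]
  have key : fromRows Jx Jξ *
      fromCols (weightedPseudoInv A Jx) (weightedPseudoInv A Jξ) = 1 := by
    rw [fromRows_mul_fromCols, h11, h12, h21, h22, fromBlocks_one]
  have key' := (mul_eq_one_comm_of_equiv finSumFinEquiv).mp key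
  rwa [fromCols_mul_fromRows] at key'
end

section
/- Under the orthogonality setting, the null-space projector of the task Jacobian equals the projector built from the null-space basis: I_n − J_x^{#A} J_x = J_ξ^{#A} J_ξ. -/
open Matrix

/-- In the orthogonality setting, the null-space projector of the task
Jacobian equals the projector built from the null-space basis:
`I − Jx^{#A} Jx = Jξ^{#A} Jξ`. -/
theorem projector_eq_nullspace_basis_projector {m r : ℕ}
    (A : Matrix (Fin (m + r)) (Fin (m + r)) ℝ) (hA : A.PosDef)
    (Jx : Matrix (Fin m) (Fin (m + r)) ℝ) (Jξ : Matrix (Fin r) (Fin (m + r)) ℝ)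
    (hx : IsUnit (Jx * A⁻¹ * Jxᵀ)) (hξ : IsUnit (Jξ * A⁻¹ * Jξᵀ))
    (horth : Jx * A⁻¹ * Jξᵀ = 0) :
    (1 : Matrix (Fin (m + r)) (Fin (m + r)) ℝ) - weightedPseudoInv A Jx * Jx =
      weightedPseudoInv A Jξ * Jξ := by
  have hAt : Aᵀ = A := by
    have h := hA.isHermitian.eq
    simpa [Matrix.conjTranspose_eq_transpose_of_trivial] using h
  have hAinv : A⁻¹ᵀ = A⁻¹ := by
    rw [Matrix.transpose_nonsing_inv, hAt]
  have horth' : Jξ * A⁻¹ * Jxᵀ = 0 := by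
    have := congrArg Matrix.transpose horth
    simpa [Matrix.transpose_mul, hAinv, Matrix.mul_assoc] using this
  set Px := weightedPseudoInv A Jx with hPx
  set Pξ := weightedPseudoInv A Jξ with hPξ
  have h11 : Jx * Px = 1 := by
    rw [hPx, weightedPseudoInv, ← Matrix.mul_assoc, ← Matrix.mul_assoc,
      Matrix.mul_nonsing_inv _ ((Matrix.isUnit_iff_isUnit_det _).mp hx)]
  have h22 : Jξ * Pξ = 1 := by
    rw [hPξ, weightedPseudoInv, ← Matrix.mul_assoc, ← Matrix.mul_assoc,
      Matrix.mul_nonsing_inv _ ((Matrix.isUnit_iff_isUnit_det _).mp hξ)]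
  have h12 : Jx * Pξ = 0 := by
    rw [hPξ, weightedPseudoInv, ← Matrix.mul_assoc, ← Matrix.mul_assoc, horth, Matrix.zero_mul]
  have h21 : Jξ * Px = 0 := by
    rw [hPx, weightedPseudoInv, ← Matrix.mul_assoc, ← Matrix.mul_assoc, horth', Matrix.zero_mul]
  have hrow : fromRows Jx Jξ * fromCols Px Pξ = 1 := by
    rw [Matrix.fromRows_mul_fromCols, h11, h22, h12, h21, Matrix.fromBlocks_one]
  have hcol : fromCols Px Pξ * fromRows Jx Jξ = 1 :=
    (Matrix.fromCols_mul_fromRows_eq_one_comm finSumFinEquiv.symm _ _ _ _).mpr hrow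
  rw [Matrix.fromCols_mul_fromRows] at hcol
  rw [sub_eq_iff_eq_add, ← hcol]; exact add_comm _ _
end

section
/- Under the orthogonality setting, the column space (range) of the projector P := I_n − J_x^{#A} J_x, viewed as a linear map ℝⁿ → ℝⁿ, equals the column space of A⁻¹ J_ξᵀ. -/
open Matrix

/-- In the orthogonality setting, the range of the null-space projector
`P = I − Jx^{#A} Jx` (as a linear map `ℝⁿ → ℝⁿ`) equals the column space of `A⁻¹ Jξᵀ`. -/
theorem projector_range_eq {m r : ℕ}
    (A : Matrix (Fin (m + r)) (Fin (m + r)) ℝ) (hA : A.PosDef)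
    (Jx : Matrix (Fin m) (Fin (m + r)) ℝ) (Jξ : Matrix (Fin r) (Fin (m + r)) ℝ)
    (hx : IsUnit (Jx * A⁻¹ * Jxᵀ)) (hξ : IsUnit (Jξ * A⁻¹ * Jξᵀ))
    (horth : Jx * A⁻¹ * Jξᵀ = 0) :
    LinearMap.range (Matrix.mulVecLin
        ((1 : Matrix (Fin (m + r)) (Fin (m + r)) ℝ) - weightedPseudoInv A Jx * Jx)) =
      LinearMap.range (Matrix.mulVecLin (A⁻¹ * Jξᵀ)) := by
  set Bx := Jx * A⁻¹ * Jxᵀ with hBx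
  set Bξ := Jξ * A⁻¹ * Jξᵀ with hBξ
  have hxd : IsUnit Bx.det := (Matrix.isUnit_iff_isUnit_det _).mp hx
  have hξd : IsUnit Bξ.det := (Matrix.isUnit_iff_isUnit_det _).mp hξ
  have hAt : Aᵀ = A := by simpa using hA.isHermitian.eq
  have hAinv : A⁻¹ᵀ = A⁻¹ := by rw [Matrix.transpose_nonsing_inv, hAt]
  have horth' : Jξ * A⁻¹ * Jxᵀ = 0 := by
    have : (Jx * A⁻¹ * Jξᵀ)ᵀ = 0 := by rw [horth]; simp
    simpa [Matrix.transpose_mul, hAinv, Matrix.mul_assoc] using this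
  set C₁ := A⁻¹ * Jxᵀ * Bx⁻¹ with hC₁
  set C₂ := A⁻¹ * Jξᵀ * Bξ⁻¹ with hC₂
  have key : fromRows Jx Jξ * fromCols C₁ C₂ = 1 := by
    rw [fromRows_mul_fromCols]
    have e11 : Jx * C₁ = 1 := by
      rw [hC₁, ← Matrix.mul_assoc, ← Matrix.mul_assoc]
      exact Matrix.mul_nonsing_inv _ hxd
    have e12 : Jx * C₂ = 0 := by
      rw [hC₂, ← Matrix.mul_assoc, ← Matrix.mul_assoc,
        show Jx * A⁻¹ * Jξᵀ = 0 from horth, Matrix.zero_mul]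
    have e21 : Jξ * C₁ = 0 := by
      rw [hC₁, ← Matrix.mul_assoc, ← Matrix.mul_assoc, horth', Matrix.zero_mul]
    have e22 : Jξ * C₂ = 1 := by
      rw [hC₂, ← Matrix.mul_assoc, ← Matrix.mul_assoc]
      exact Matrix.mul_nonsing_inv _ hξd
    rw [e11, e12, e21, e22, Matrix.fromBlocks_one]
  have key2 : C₁ * Jx + C₂ * Jξ = 1 := by
    have := (fromCols_mul_fromRows_eq_one_comm finSumFinEquiv.symm
      C₁ C₂ Jx Jξ).mpr key
    rwa [fromCols_mul_fromRows] at this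
  have hP : (1 : Matrix (Fin (m + r)) (Fin (m + r)) ℝ) - weightedPseudoInv A Jx * Jx
      = (A⁻¹ * Jξᵀ) * (Bξ⁻¹ * Jξ) := by
    have h1 : (1 : Matrix (Fin (m + r)) (Fin (m + r)) ℝ) - C₁ * Jx = C₂ * Jξ := by
      rw [← key2]; abel
    calc (1 : Matrix (Fin (m + r)) (Fin (m + r)) ℝ) - weightedPseudoInv A Jx * Jx
        = 1 - C₁ * Jx := rfl
      _ = C₂ * Jξ := h1
      _ = (A⁻¹ * Jξᵀ) * (Bξ⁻¹ * Jξ) := by rw [hC₂, Matrix.mul_assoc]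
  rw [hP, Matrix.mulVecLin_mul]
  apply le_antisymm
  · exact LinearMap.range_comp_le_range _ _
  · rintro w ⟨y, rfl⟩
    refine ⟨(A⁻¹ * Jξᵀ).mulVec y, ?_⟩
    have h2 : (Bξ⁻¹ * Jξ) * (A⁻¹ * Jξᵀ) = 1 := by
      rw [Matrix.mul_assoc Bξ⁻¹, ← Matrix.mul_assoc Jξ A⁻¹ Jξᵀ]
      exact Matrix.nonsing_inv_mul _ hξd
    simp only [LinearMap.comp_apply, Matrix.mulVecLin_apply, Matrix.mulVec_mulVec, h2,
      Matrix.mul_one]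
end
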